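/- arXiv:2312.10910 — 3 statements merged into one kernel-verified Lean document; each statement's English description precedes it below -/
import Mathlib

section
/- Let h ≥ 1 and let A = {a_0 < a_1 < ... < a_k} be a finite B_h-set of integers with k ≥ 1. Then a_k ≥ a_0 + (1/h)·(binom(k+h, k) − 1); equivalently, h·(a_k − a_0) ≥ binom(k+h, k) − 1. -/
/-- A set `A` of integers is a `B_h`-set if every solution to
`a_1 + ... + a_h = b_1 + ... + b_h` with all `a_i, b_i ∈ A` has
`{a_1, ..., a_h} = {b_1, ..., b_h}` as multisets. -/
def IsBhSet (h : ℕ) (A : Set ℤ) : Prop :=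
  ∀ a b : Fin h → ℤ, (∀ i, a i ∈ A) → (∀ i, b i ∈ A) →
    (∑ i, a i) = (∑ i, b i) →
    Multiset.map a Finset.univ.val = Multiset.map b Finset.univ.val

theorem stmt_0 (h k : ℕ) (hh : 1 ≤ h) (hk : 1 ≤ k)
    (a : Fin (k + 1) → ℤ) (ha : StrictMono a)
    (hA : IsBhSet h (Set.range a)) :
    (h : ℤ) * (a (Fin.last k) - a 0) ≥ ((k + h).choose k : ℤ) - 1 := by
  -- the sum map on Sym (Fin (k+1)) h
  set f : Sym (Fin (k + 1)) h → ℤ := fun s => (s.val.map a).sum with hf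
  -- present a Sym element as a function Fin h → Fin (k+1)
  have repr : ∀ s : Sym (Fin (k + 1)) h, ∃ g : Fin h → Fin (k + 1),
      Multiset.map g Finset.univ.val = s.val := by
    intro s
    obtain ⟨l, hl⟩ := Quotient.exists_rep s.val
    have hlen : l.length = h := by
      have := s.2; rw [← hl] at this; simpa using this
    refine ⟨fun i => l.get (Fin.cast hlen.symm i), ?_⟩
    rw [Fin.univ_val_map, ← hl]
    have : List.ofFn (fun i : Fin h => l.get (Fin.cast hlen.symm i)) = l := by
      subst hlen; simp [List.ofFn_get]
    exact congrArg Multiset.ofList this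
  have finj : Function.Injective f := by
    intro s t hst
    obtain ⟨gs, hgs⟩ := repr s
    obtain ⟨gt, hgt⟩ := repr t
    have key := hA (a ∘ gs) (a ∘ gt) (fun i => ⟨gs i, rfl⟩) (fun i => ⟨gt i, rfl⟩) ?_
    · have hs : Multiset.map (a ∘ gs) Finset.univ.val = s.val.map a := by
        rw [← Multiset.map_map, hgs]
      have ht : Multiset.map (a ∘ gt) Finset.univ.val = t.val.map a := by
        rw [← Multiset.map_map, hgt]
      rw [hs, ht] at key
      have := Multiset.map_injective ha.injective key
      exact Sym.coe_injective this
    · have hs : ∑ i, (a ∘ gs) i = f s := by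
        rw [hf]
        simp only [Finset.sum]
        rw [← hgs, ← Multiset.map_map, Multiset.map_map]
      have ht : ∑ i, (a ∘ gt) i = f t := by
        rw [hf]
        simp only [Finset.sum]
        rw [← hgt, ← Multiset.map_map, Multiset.map_map]
      rw [hs, ht, hst]
  -- bounds
  have hmem : ∀ s : Sym (Fin (k + 1)) h, f s ∈ Finset.Icc ((h : ℤ) * a 0) ((h : ℤ) * a (Fin.last k)) := by
    intro s
    have hcard : Multiset.card (s.val.map a) = h := by simp [s.2]
    rw [Finset.mem_Icc]
    constructor
    · have := Multiset.card_nsmul_le_sum (s := s.val.map a) (a := a 0) ?_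
      · rw [hcard] at this; simpa [nsmul_eq_mul, hf] using this
      · intro x hx
        obtain ⟨i, _, rfl⟩ := Multiset.mem_map.1 hx
        exact (ha.monotone (Fin.zero_le i))
    · have := Multiset.sum_le_card_nsmul (s.val.map a) (a (Fin.last k)) ?_
      · rw [hcard] at this; simpa [nsmul_eq_mul, hf] using this
      · intro x hx
        obtain ⟨i, _, rfl⟩ := Multiset.mem_map.1 hx
        exact (ha.monotone (Fin.le_last i))
  -- cardinality count
  have hle : Fintype.card (Sym (Fin (k + 1)) h) ≤
      (Finset.Icc ((h : ℤ) * a 0) ((h : ℤ) * a (Fin.last k))).card := by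
    classical
    have := Finset.card_le_card_of_injOn (s := (Finset.univ : Finset (Sym (Fin (k+1)) h)))
      f (fun s _ => hmem s) (fun x _ y _ hxy => finj hxy)
    simpa using this
  have hcardSym : Fintype.card (Sym (Fin (k + 1)) h) = (k + h).choose k := by
    rw [Sym.card_sym_eq_choose]
    have e1 : Fintype.card (Fin (k + 1)) + h - 1 = k + h := by
      rw [Fintype.card_fin]; omega
    rw [e1, ← Nat.choose_symm (Nat.le_add_left h k)]
    congr 1
    omega
  rw [hcardSym, Int.card_Icc] at hle
  have hnn : (0:ℤ) ≤ (h : ℤ) * a (Fin.last k) + 1 - (h : ℤ) * a 0 := by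
    have : (h : ℤ) * a 0 ≤ (h : ℤ) * a (Fin.last k) :=
      mul_le_mul_of_nonneg_left (ha.monotone (Fin.le_last 0)) (by positivity)
    linarith
  have h2 : ((k + h).choose k : ℤ) ≤ (h : ℤ) * a (Fin.last k) + 1 - (h : ℤ) * a 0 := by
    have := (Int.toNat_of_nonneg hnn) ▸ (Int.ofNat_le.mpr hle)
    exact this
  linarith
end

section
/- Let h ≥ 1 and let A = {a_0 < a_1 < ... < a_k} be a finite B_h-set of integers. Then the set of integers f > a_k for which A ∪ {f} is not a B_h-set has cardinality at most Σ_{r=1}^{h−1} Σ_{M=1}^{k} binom(k, M)·binom(k−M+h−r, h−r)·(binom(h, M) − binom(r, M)). -/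
open Finset

def cnt (h : ℕ) (w : Fin h → ℤ) (z : ℤ) : ℕ := (Finset.univ.filter fun i => w i = z).card

def psum {k : ℕ} (S : Finset (Fin k)) (m : Fin (k+1) → ℕ) (j : Fin k) : ℕ :=
  ∑ j' ∈ S.filter (fun j' => j' ≤ j), m j'.succ

def encFn (h k : ℕ) (hh : 0 < h) (S : Finset (Fin k)) (m : Fin (k+1) → ℕ) : Fin k → Fin h :=
  fun j => ⟨(psum S m j - 1) % h, Nat.mod_lt _ hh⟩

section
variable {h k : ℕ} {S : Finset (Fin k)} {m : Fin (k+1) → ℕ}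

lemma mem_psum_filter {j : Fin k} (hj : j ∈ S) :
    j ∈ S.filter (fun j' => j' ≤ j) := Finset.mem_filter.mpr ⟨hj, le_refl j⟩

lemma psum_strictMonoOn (hm : ∀ j ∈ S, m j.succ ≠ 0) :
    ∀ j ∈ S, ∀ j' ∈ S, j < j' → psum S m j < psum S m j' := by
  intro j hj j' hj' hlt
  refine Finset.sum_lt_sum_of_subset ?_ (i := j') ?_ ?_ ?_ ?_
  · intro x hx
    simp only [Finset.mem_filter] at hx ⊢
    exact ⟨hx.1, le_trans hx.2 hlt.le⟩
  · exact Finset.mem_filter.mpr ⟨hj', le_refl _⟩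
  · simp only [Finset.mem_filter, not_and, not_le]
    exact fun _ => hlt
  · exact Nat.pos_of_ne_zero (hm j' hj')
  · exact fun _ _ _ => Nat.zero_le _

lemma psum_pos (hm : ∀ j ∈ S, m j.succ ≠ 0) : ∀ j ∈ S, 1 ≤ psum S m j := by
  intro j hj
  have h1 : m j.succ ≤ psum S m j :=
    Finset.single_le_sum (f := fun j' => m j'.succ) (fun _ _ => Nat.zero_le _) (mem_psum_filter hj)
  have h2 := Nat.pos_of_ne_zero (hm j hj)
  omega

lemma psum_le (j : Fin k) : psum S m j ≤ ∑ j' ∈ S, m j'.succ :=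
  Finset.sum_le_sum_of_subset (Finset.filter_subset _ _)

lemma encFn_val (hh : 0 < h) (ht : ∑ j' ∈ S, m j'.succ ≤ h) (hm : ∀ j ∈ S, m j.succ ≠ 0)
    {j : Fin k} (hj : j ∈ S) : (encFn h k hh S m j : ℕ) = psum S m j - 1 := by
  have h1 := psum_pos hm j hj
  have h2 := le_trans (psum_le j) ht
  exact Nat.mod_eq_of_lt (by omega)

lemma encFn_strictMonoOn (hh : 0 < h) (ht : ∑ j' ∈ S, m j'.succ ≤ h)
    (hm : ∀ j ∈ S, m j.succ ≠ 0) :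
    ∀ j ∈ S, ∀ j' ∈ S, j < j' → encFn h k hh S m j < encFn h k hh S m j' := by
  intro j hj j' hj' hlt
  have := psum_strictMonoOn hm j hj j' hj' hlt
  have e1 := encFn_val hh ht hm hj
  have e2 := encFn_val hh ht hm hj'
  have p1 := psum_pos hm j hj
  rw [Fin.lt_def, e1, e2]
  omega
end

section
variable {h k : ℕ} {S : Finset (Fin k)}

lemma psum_eq_of_encFn_eq (hh : 0 < h) {m m' : Fin (k+1) → ℕ}
    (hm : ∀ j ∈ S, m j.succ ≠ 0) (hm' : ∀ j ∈ S, m' j.succ ≠ 0)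
    (ht : ∑ j' ∈ S, m j'.succ ≤ h) (ht' : ∑ j' ∈ S, m' j'.succ ≤ h)
    (hP : S.image (encFn h k hh S m) = S.image (encFn h k hh S m')) :
    ∀ j ∈ S, psum S m j = psum S m' j := by
  -- strictly monotone maps with equal images coincide
  set F : Fin S.card → Fin h := fun i => encFn h k hh S m (S.orderEmbOfFin rfl i) with hF
  set F' : Fin S.card → Fin h := fun i => encFn h k hh S m' (S.orderEmbOfFin rfl i) with hF'
  have hmemS : ∀ i, S.orderEmbOfFin rfl i ∈ S := fun i => Finset.orderEmbOfFin_mem S rfl i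
  have hFmono : StrictMono F := fun i i' hi =>
    encFn_strictMonoOn hh ht hm _ (hmemS i) _ (hmemS i') ((S.orderEmbOfFin rfl).strictMono hi)
  have hF'mono : StrictMono F' := fun i i' hi =>
    encFn_strictMonoOn hh ht' hm' _ (hmemS i) _ (hmemS i') ((S.orderEmbOfFin rfl).strictMono hi)
  have hinj : Set.InjOn (encFn h k hh S m) S := by
    intro x hx y hy hxy
    rcases lt_trichotomy x y with hlt | rfl | hlt
    · exact absurd hxy (ne_of_lt (encFn_strictMonoOn hh ht hm _ hx _ hy hlt))
    · rfl
    · exact absurd hxy.symm (ne_of_lt (encFn_strictMonoOn hh ht hm _ hy _ hx hlt))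
  have hcard : (S.image (encFn h k hh S m)).card = S.card := Finset.card_image_of_injOn hinj
  have hFP : ∀ i, F i ∈ S.image (encFn h k hh S m) := fun i => Finset.mem_image_of_mem _ (hmemS i)
  have hF'P : ∀ i, F' i ∈ S.image (encFn h k hh S m) := fun i => by
    rw [hP]; exact Finset.mem_image_of_mem _ (hmemS i)
  have e1 := Finset.orderEmbOfFin_unique hcard hFP hFmono
  have e2 := Finset.orderEmbOfFin_unique hcard hF'P hF'mono
  have hFF' : F = F' := e1.trans e2.symm
  intro j hj
  -- j is in the range of orderEmbOfFin
  have : ∃ i, S.orderEmbOfFin rfl i = j := by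
    have := Finset.range_orderEmbOfFin S rfl
    have hj' : j ∈ Set.range (S.orderEmbOfFin rfl) := by rw [this]; exact hj
    exact hj'
  obtain ⟨i, rfl⟩ := this
  have hval : encFn h k hh S m (S.orderEmbOfFin rfl i)
      = encFn h k hh S m' (S.orderEmbOfFin rfl i) := congrFun hFF' i
  have v1 := encFn_val hh ht hm (hmemS i)
  have v2 := encFn_val hh ht' hm' (hmemS i)
  have p1 := psum_pos hm _ (hmemS i)
  have p2 := psum_pos hm' _ (hmemS i)
  have : (encFn h k hh S m (S.orderEmbOfFin rfl i) : ℕ)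
      = (encFn h k hh S m' (S.orderEmbOfFin rfl i) : ℕ) := by rw [hval]
  omega
end

section
variable {h k : ℕ} {S : Finset (Fin k)}

lemma psum_split {m : Fin (k+1) → ℕ} {j : Fin k} (hj : j ∈ S) :
    psum S m j = m j.succ + ∑ j' ∈ S.filter (fun j' => j' < j), m j'.succ := by
  have hsplit : S.filter (fun j' => j' ≤ j) = insert j (S.filter (fun j' => j' < j)) := by
    ext x
    simp only [Finset.mem_filter, Finset.mem_insert]
    constructor
    · rintro ⟨hx, hle⟩
      rcases eq_or_lt_of_le hle with rfl | hlt
      · exact Or.inl rfl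
      · exact Or.inr ⟨hx, hlt⟩
    · rintro (rfl | ⟨hx, hlt⟩)
      · exact ⟨hj, le_refl _⟩
      · exact ⟨hx, hlt.le⟩
  rw [psum, hsplit, Finset.sum_insert (by simp)]

lemma psum_lt_eq {m : Fin (k+1) → ℕ} {j : Fin k} (hne : (S.filter (fun j' => j' < j)).Nonempty) :
    ∑ j' ∈ S.filter (fun j' => j' < j), m j'.succ
      = psum S m ((S.filter (fun j' => j' < j)).max' hne) := by
  set j₀ := (S.filter (fun j' => j' < j)).max' hne with hj₀
  have hj₀mem := (S.filter (fun j' => j' < j)).max'_mem hne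
  rw [psum]
  congr 1
  ext x
  simp only [Finset.mem_filter] at hj₀mem ⊢
  constructor
  · rintro ⟨hx, hlt⟩
    exact ⟨hx, Finset.le_max' (S.filter (fun j' => j' < j)) x (Finset.mem_filter.mpr ⟨hx, hlt⟩)⟩
  · rintro ⟨hx, hle⟩
    exact ⟨hx, lt_of_le_of_lt hle hj₀mem.2⟩

lemma m_eq_of_psum_eq {m m' : Fin (k+1) → ℕ}
    (hpsum : ∀ j ∈ S, psum S m j = psum S m' j) :
    ∀ j ∈ S, m j.succ = m' j.succ := by
  intro j hj
  have h1 := psum_split (m := m) hj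
  have h2 := psum_split (m := m') hj
  by_cases hne : (S.filter (fun j' => j' < j)).Nonempty
  · have e1 := psum_lt_eq (m := m) hne
    have e2 := psum_lt_eq (m := m') hne
    have hmax := (S.filter (fun j' => j' < j)).max'_mem hne
    have hmaxS : (S.filter (fun j' => j' < j)).max' hne ∈ S := (Finset.mem_filter.mp hmax).1
    have := hpsum _ hmaxS
    have := hpsum j hj
    omega
  · rw [Finset.not_nonempty_iff_eq_empty] at hne
    rw [hne, Finset.sum_empty] at h1 h2
    have := hpsum j hj
    omega

lemma enc_inj (hh : 0 < h) {m m' : Fin (k+1) → ℕ}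
    (hm : ∀ j : Fin k, j ∈ S ↔ m j.succ ≠ 0) (hm' : ∀ j : Fin k, j ∈ S ↔ m' j.succ ≠ 0)
    (hsum : ∑ i, m i = ∑ i, m' i)
    (ht : ∑ j' ∈ S, m j'.succ ≤ h) (ht' : ∑ j' ∈ S, m' j'.succ ≤ h)
    (hP : S.image (encFn h k hh S m) = S.image (encFn h k hh S m')) : m = m' := by
  have hpsum := psum_eq_of_encFn_eq hh (fun j hj => (hm j).mp hj) (fun j hj => (hm' j).mp hj)
    ht ht' hP
  have hsucc : ∀ j : Fin k, m j.succ = m' j.succ := by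
    intro j
    by_cases hj : j ∈ S
    · exact m_eq_of_psum_eq hpsum j hj
    · have e1 := (hm j); have e2 := (hm' j)
      simp only [hj, false_iff, not_not] at e1 e2
      rw [e1, e2]
  have h0 : m 0 = m' 0 := by
    rw [Fin.sum_univ_succ, Fin.sum_univ_succ] at hsum
    have : ∑ j : Fin k, m j.succ = ∑ j : Fin k, m' j.succ :=
      Finset.sum_congr rfl (fun j _ => hsucc j)
    omega
  funext i
  rcases Fin.eq_zero_or_eq_succ i with rfl | ⟨j, rfl⟩
  · exact h0
  · exact hsucc j
end

def nMult (k : ℕ) (n : Fin (k+1) → ℕ) : Multiset (Fin (k+1)) :=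
  ∑ i : Fin (k+1), n i • ({i} : Multiset (Fin (k+1)))

def Ydom (k : ℕ) (T : Finset (Fin (k+1))) (c : ℕ) : Finset (Multiset (Fin (k+1))) :=
  (Finset.univ : Finset (Sym {x // x ∈ T} c)).image
    (fun z => Multiset.map Subtype.val z.toMultiset)

section
variable {k : ℕ}

lemma count_nMult (n : Fin (k+1) → ℕ) (i : Fin (k+1)) : (nMult k n).count i = n i := by
  rw [nMult]
  rw [Multiset.count_sum']
  rw [Finset.sum_congr rfl (fun j _ => by
    rw [Multiset.count_nsmul, Multiset.count_singleton])]
  simp only [mul_ite, mul_one, mul_zero]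
  rw [Finset.sum_ite_eq Finset.univ i n]
  simp

lemma card_nMult (n : Fin (k+1) → ℕ) : Multiset.card (nMult k n) = ∑ i, n i := by
  rw [nMult]
  rw [Multiset.card_sum]
  simp

lemma mem_nMult_iff (n : Fin (k+1) → ℕ) (i : Fin (k+1)) : i ∈ nMult k n ↔ n i ≠ 0 := by
  rw [← Multiset.count_pos, count_nMult]
  omega

lemma nMult_inj (n n' : Fin (k+1) → ℕ) (hnn : nMult k n = nMult k n') : n = n' := by
  funext i
  rw [← count_nMult n i, ← count_nMult n' i, hnn]

lemma mem_Ydom (T : Finset (Fin (k+1))) (c : ℕ) (y : Multiset (Fin (k+1)))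
    (hc : Multiset.card y = c) (hy : ∀ i ∈ y, i ∈ T) : y ∈ Ydom k T c := by
  rw [Ydom, Finset.mem_image]
  refine ⟨⟨y.pmap (fun i hi => (⟨i, hy i hi⟩ : {x // x ∈ T})) (fun _ hi => hi), by
    rw [Multiset.card_pmap, hc]⟩, Finset.mem_univ _, ?_⟩
  simp only [Sym.toMultiset]
  rw [Multiset.map_pmap]
  simp [Multiset.pmap_eq_map]
end

lemma card_fin_filter_lt (h r : ℕ) (hr : r ≤ h) :
    ((Finset.univ : Finset (Fin h)).filter (fun p : Fin h => (p : ℕ) < r)).card = r := by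
  have : (Finset.univ : Finset (Fin h)).filter (fun p : Fin h => (p : ℕ) < r)
      = (Finset.range r).attachFin (fun m hm => lt_of_lt_of_le (Finset.mem_range.mp hm) hr) := by
    ext p
    simp [Finset.mem_attachFin]
  rw [this, Finset.card_attachFin, Finset.card_range]

lemma card_Pset' (h M r : ℕ) (hr : r ≤ h) :
    ((Finset.powersetCard M (Finset.univ : Finset (Fin h))).filter
      (fun P => ∃ p ∈ P, r ≤ p.val)).card = h.choose M - r.choose M := by
  have hneg : (Finset.powersetCard M (Finset.univ : Finset (Fin h))).filter
      (fun P => ¬ ∃ p ∈ P, r ≤ p.val)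
      = Finset.powersetCard M ((Finset.univ : Finset (Fin h)).filter (fun p : Fin h => (p : ℕ) < r)) := by
    ext P
    simp only [Finset.mem_filter, Finset.mem_powersetCard]
    push_neg
    constructor
    · rintro ⟨⟨-, hc⟩, hlt⟩
      refine ⟨fun p hp => Finset.mem_filter.mpr ⟨Finset.mem_univ _, hlt p hp⟩, hc⟩
    · rintro ⟨hsub, hc⟩
      exact ⟨⟨Finset.subset_univ _, hc⟩, fun p hp => (Finset.mem_filter.mp (hsub hp)).2⟩
  have htot := Finset.card_filter_add_card_filter_not
    (s := Finset.powersetCard M (Finset.univ : Finset (Fin h)))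
    (p := fun P => ∃ p ∈ P, r ≤ p.val)
  rw [hneg, Finset.card_powersetCard, card_fin_filter_lt h r hr] at htot
  rw [Finset.card_powersetCard, Finset.card_univ, Fintype.card_fin] at htot
  omega

def Pset (h M r : ℕ) : Finset (Finset (Fin h)) :=
  (Finset.powersetCard M (Finset.univ : Finset (Fin h))).filter (fun P => ∃ p ∈ P, r ≤ p.val)

lemma card_Pset (h M r : ℕ) (hr : r ≤ h) : (Pset h M r).card = h.choose M - r.choose M :=
  card_Pset' h M r hr

def Dfin (h k : ℕ) : Finset ((_ : ℕ) × (_ : Finset (Fin k)) × Multiset (Fin (k+1)) × Finset (Fin h)) :=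
  (Finset.Icc 1 (h-1)).sigma (fun r => (Finset.univ.powerset).sigma
    (fun S => (Ydom k (Finset.univ \ S.image Fin.succ) (h - r)) ×ˢ (Pset h S.card r)))

lemma card_Ydom (k : ℕ) (T : Finset (Fin (k+1))) (c : ℕ) :
    (Ydom k T c).card = (T.card + c - 1).choose c := by
  rw [Ydom, Finset.card_image_of_injective _ ?inj, Finset.card_univ, Sym.card_sym_eq_choose,
    Fintype.card_coe]
  case inj =>
    intro z z' hz
    exact Sym.coe_injective (Multiset.map_injective Subtype.val_injective hz)

lemma card_Dfin (h k : ℕ) (hh : 1 ≤ h) :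
    (Dfin h k).card = ∑ r ∈ Finset.Icc 1 (h - 1), ∑ M ∈ Finset.Icc 1 k,
      k.choose M * (k - M + h - r).choose (h - r) * (h.choose M - r.choose M) := by
  rw [Dfin, Finset.card_sigma]
  refine Finset.sum_congr rfl (fun r hr => ?_)
  obtain ⟨hr1, hr2⟩ := Finset.mem_Icc.mp hr
  rw [Finset.card_sigma]
  have step : ∀ S ∈ (Finset.univ : Finset (Fin k)).powerset,
      ((Ydom k (Finset.univ \ S.image Fin.succ) (h - r)) ×ˢ (Pset h S.card r)).card
      = (k - S.card + h - r).choose (h - r) * (h.choose S.card - r.choose S.card) := by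
    intro S _
    have hM : S.card ≤ k := le_trans (Finset.card_le_univ S) (by simp)
    rw [Finset.card_product, card_Ydom, card_Pset h S.card r (by omega)]
    congr 2
    have himg : (S.image Fin.succ).card = S.card :=
      Finset.card_image_of_injective _ (Fin.succ_injective _)
    have hsub : S.image Fin.succ ⊆ Finset.univ := Finset.subset_univ _
    rw [Finset.card_sdiff_of_subset hsub, himg, Finset.card_univ, Fintype.card_fin]
    omega
  rw [Finset.sum_congr rfl step]
  rw [Finset.sum_powerset_apply_card
    (fun M => (k - M + h - r).choose (h - r) * (h.choose M - r.choose M))]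
  have hcard : (Finset.univ : Finset (Fin k)).card = k := by simp
  rw [hcard]
  have hins : Finset.range (k+1) = insert 0 (Finset.Icc 1 k) := by
    ext x; simp [Finset.mem_range, Finset.mem_Icc]; omega
  rw [hins, Finset.sum_insert (by simp)]
  have h0 : h.choose 0 - r.choose 0 = 0 := by simp
  rw [h0]
  simp only [smul_eq_mul, mul_zero, zero_add, mul_assoc]

section
variable {h k : ℕ} {a : Fin (k+1) → ℤ}

lemma cnt_eq_count (w : Fin h → ℤ) (z : ℤ) :
    cnt h w z = (Multiset.map w Finset.univ.val).count z := by
  rw [Multiset.count_map]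
  have heq : Finset.filter (fun i => w i = z) Finset.univ
      = Finset.filter (fun i => z = w i) Finset.univ := by
    apply Finset.filter_congr
    intro i _
    exact eq_comm
  rw [cnt, heq, Finset.card, Finset.filter_val]

lemma map_eq_iff_cnt (w w' : Fin h → ℤ) :
    Multiset.map w Finset.univ.val = Multiset.map w' Finset.univ.val
      ↔ ∀ z, cnt h w z = cnt h w' z := by
  constructor
  · intro hm z
    rw [cnt_eq_count, cnt_eq_count, hm]
  · intro hz
    ext z
    rw [← cnt_eq_count, ← cnt_eq_count]
    exact hz z
end

section
variable {h k : ℕ} {a : Fin (k+1) → ℤ} {f : ℤ}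

lemma fiber_eq (ha : Function.Injective a) (hfa : ∀ j, a j ≠ f)
    {w : Fin h → ℤ} (hw : ∀ i, w i ∈ Set.range a ∪ {f})
    (g : Fin h → Fin (k+1))
    (hg : ∀ i, w i ≠ f → a (g i) = w i) (j : Fin (k+1)) :
    (Finset.univ.filter (fun i => w i ≠ f)).filter (fun i => g i = j)
      = Finset.univ.filter (fun i => w i = a j) := by
  ext i
  simp only [Finset.mem_filter, Finset.mem_univ, true_and]
  constructor
  · rintro ⟨hne, rfl⟩
    exact (hg i hne).symm
  · intro haj
    have hne : w i ≠ f := by rw [haj]; exact hfa j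
    refine ⟨hne, ha ?_⟩
    rw [hg i hne, haj]

lemma exists_g (ha : Function.Injective a) {w : Fin h → ℤ}
    (hw : ∀ i, w i ∈ Set.range a ∪ {f}) :
    ∃ g : Fin h → Fin (k+1), ∀ i, w i ≠ f → a (g i) = w i := by
  classical
  refine ⟨fun i => if hx : ∃ j, a j = w i then hx.choose else 0, fun i hne => ?_⟩
  rcases hw i with ⟨j, hj⟩ | hfm
  · have hx : ∃ j, a j = w i := ⟨j, hj⟩
    simp only [dif_pos hx]
    exact hx.choose_spec
  · exact absurd hfm hne

lemma cnt_decomp_card (ha : Function.Injective a) (hfa : ∀ j, a j ≠ f)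
    {w : Fin h → ℤ} (hw : ∀ i, w i ∈ Set.range a ∪ {f}) :
    cnt h w f + ∑ j : Fin (k+1), cnt h w (a j) = h := by
  classical
  obtain ⟨g, hg⟩ := exists_g ha hw
  have hcard := Finset.card_filter_add_card_filter_not
    (s := (Finset.univ : Finset (Fin h))) (p := fun i => w i = f)
  rw [Finset.card_univ, Fintype.card_fin] at hcard
  have hfib := Finset.card_eq_sum_card_fiberwise
    (s := Finset.univ.filter (fun i => w i ≠ f)) (t := Finset.univ) (f := g)
    (fun x _ => Finset.mem_univ _)
  rw [cnt]
  have : ∀ j : Fin (k+1), (Finset.univ.filter (fun i => w i ≠ f)).filter (fun i => g i = j)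
      = Finset.univ.filter (fun i => w i = a j) := fiber_eq ha hfa hw g hg
  calc (Finset.univ.filter fun i => w i = f).card + ∑ j : Fin (k+1), cnt h w (a j)
      = (Finset.univ.filter fun i => w i = f).card
        + ∑ j : Fin (k+1),
            ((Finset.univ.filter (fun i => w i ≠ f)).filter (fun i => g i = j)).card := by
        congr 1
        exact Finset.sum_congr rfl (fun j _ => by rw [this j, cnt])
    _ = (Finset.univ.filter fun i => w i = f).card
        + (Finset.univ.filter (fun i => w i ≠ f)).card := by rw [← hfib]
    _ = h := by
        simpa using hcard

lemma cnt_decomp_sum (ha : Function.Injective a) (hfa : ∀ j, a j ≠ f)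
    {w : Fin h → ℤ} (hw : ∀ i, w i ∈ Set.range a ∪ {f}) :
    (∑ i, w i) = (cnt h w f : ℤ) * f + ∑ j : Fin (k+1), (cnt h w (a j) : ℤ) * a j := by
  classical
  obtain ⟨g, hg⟩ := exists_g ha hw
  have hsplit := Finset.sum_filter_add_sum_filter_not
    (Finset.univ : Finset (Fin h)) (fun i => w i = f) w
  have h1 : ∑ i ∈ Finset.univ.filter (fun i => w i = f), w i = (cnt h w f : ℤ) * f := by
    rw [Finset.sum_congr rfl (fun i hi => (Finset.mem_filter.mp hi).2), Finset.sum_const,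
      nsmul_eq_mul, cnt]
  have h2 : ∑ i ∈ Finset.univ.filter (fun i => w i ≠ f), w i
      = ∑ j : Fin (k+1), (cnt h w (a j) : ℤ) * a j := by
    rw [← Finset.sum_fiberwise_of_maps_to
      (s := Finset.univ.filter (fun i => w i ≠ f)) (t := Finset.univ) (g := g)
      (fun x _ => Finset.mem_univ _) w]
    refine Finset.sum_congr rfl (fun j _ => ?_)
    rw [fiber_eq ha hfa hw g hg j]
    rw [Finset.sum_congr rfl (fun i hi => (Finset.mem_filter.mp hi).2), Finset.sum_const,
      nsmul_eq_mul, cnt]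
  rw [← hsplit, h1, h2]
end

section
variable {h k : ℕ} {a : Fin (k+1) → ℤ} {f : ℤ}

lemma cnt_f_ne (hA : IsBhSet h (Set.range a)) (ha : Function.Injective a)
    (hfa : ∀ j, a j ≠ f) {u v : Fin h → ℤ}
    (hu : ∀ i, u i ∈ Set.range a ∪ {f}) (hv : ∀ i, v i ∈ Set.range a ∪ {f})
    (hsum : ∑ i, u i = ∑ i, v i)
    (hne : Multiset.map u Finset.univ.val ≠ Multiset.map v Finset.univ.val) :
    cnt h u f ≠ cnt h v f := by
  classical
  intro hcc
  set u' : Fin h → ℤ := fun i => if u i = f then a 0 else u i with hu'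
  set v' : Fin h → ℤ := fun i => if v i = f then a 0 else v i with hv'
  have hmem : ∀ (w : Fin h → ℤ) (hw : ∀ i, w i ∈ Set.range a ∪ {f}) i,
      (fun i => if w i = f then a 0 else w i) i ∈ Set.range a := by
    intro w hw i
    by_cases hc : w i = f
    · simp only [hc, if_pos rfl]; exact ⟨0, rfl⟩
    · simp only [if_neg hc]
      rcases hw i with hr | hf
      · exact hr
      · exact absurd hf hc
  have hsum' : ∀ (w : Fin h → ℤ), (∑ i, (fun i => if w i = f then a 0 else w i) i)
      = (∑ i, w i) - (cnt h w f : ℤ) * f + (cnt h w f : ℤ) * a 0 := by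
    intro w
    have hs := Finset.sum_filter_add_sum_filter_not
      (Finset.univ : Finset (Fin h)) (fun i => w i = f) (fun i => if w i = f then a 0 else w i)
    have e1 : ∑ i ∈ Finset.univ.filter (fun i => w i = f),
        (if w i = f then a 0 else w i) = (cnt h w f : ℤ) * a 0 := by
      rw [Finset.sum_congr rfl (fun i hi => by
        rw [if_pos (Finset.mem_filter.mp hi).2]), Finset.sum_const, nsmul_eq_mul, cnt]
    have e2 : ∑ i ∈ Finset.univ.filter (fun i => ¬ w i = f),
        (if w i = f then a 0 else w i) = ∑ i ∈ Finset.univ.filter (fun i => ¬ w i = f), w i := by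
      refine Finset.sum_congr rfl (fun i hi => by rw [if_neg (Finset.mem_filter.mp hi).2])
    have hs2 := Finset.sum_filter_add_sum_filter_not
      (Finset.univ : Finset (Fin h)) (fun i => w i = f) w
    have e3 : ∑ i ∈ Finset.univ.filter (fun i => w i = f), w i = (cnt h w f : ℤ) * f := by
      rw [Finset.sum_congr rfl (fun i hi => (Finset.mem_filter.mp hi).2), Finset.sum_const,
        nsmul_eq_mul, cnt]
    rw [← hs, e1, e2]
    rw [← hs2, e3] 
    ring
  have heq : (∑ i, u' i) = (∑ i, v' i) := by
    rw [hu', hv', hsum' u, hsum' v, hsum, hcc]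
  have hmul := hA u' v' (hmem u hu) (hmem v hv) heq
  rw [map_eq_iff_cnt] at hmul
  -- now derive cnt u z = cnt v z for all z
  apply hne
  rw [map_eq_iff_cnt]
  intro z
  by_cases hzf : z = f
  · subst hzf; exact hcc
  by_cases hza : ∃ j, a j = z
  · obtain ⟨j, rfl⟩ := hza
    by_cases hj0 : j = 0
    · subst hj0
      have key : ∀ (w : Fin h → ℤ),
          cnt h (fun i => if w i = f then a 0 else w i) (a 0) = cnt h w (a 0) + cnt h w f := by
        intro w
        rw [cnt, cnt, cnt, ← Finset.card_union_of_disjoint (by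
          rw [Finset.disjoint_filter]
          intro i _ hw0
          rw [hw0]
          exact hfa 0)]
        congr 1
        ext i
        simp only [Finset.mem_filter, Finset.mem_univ, true_and, Finset.mem_union]
        by_cases hc : w i = f
        · simp [hc]
        · simp [hc]
      have := hmul (a 0)
      rw [hu', hv'] at this
      rw [key u, key v] at this
      omega
    · have key : ∀ (w : Fin h → ℤ),
          cnt h (fun i => if w i = f then a 0 else w i) (a j) = cnt h w (a j) := by
        intro w
        rw [cnt, cnt]
        congr 1
        ext i
        simp only [Finset.mem_filter, Finset.mem_univ, true_and]
        by_cases hc : w i = f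
        · simp only [hc, if_pos rfl]
          constructor
          · intro h0j
            exact absurd (ha h0j) (Ne.symm hj0)
          · intro hwij
            exact absurd hwij.symm (hfa j)
        · simp [hc]
      have := hmul (a j)
      rw [hu', hv'] at this
      rw [key u, key v] at this
      exact this
  · have key : ∀ (w : Fin h → ℤ) (hw : ∀ i, w i ∈ Set.range a ∪ {f}), cnt h w z = 0 := by
      intro w hw
      rw [cnt, Finset.card_eq_zero]
      ext i
      simp only [Finset.mem_filter, Finset.mem_univ, true_and, Finset.notMem_empty, iff_false]
      intro hwz
      rcases hw i with ⟨j, hj⟩ | hf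
      · exact hza ⟨j, by rw [hj, hwz]⟩
      · rw [hwz] at hf
        exact hzf hf
    rw [key u hu, key v hv]
end

section
variable {h k : ℕ} {a : Fin (k+1) → ℤ} {f : ℤ}

lemma data_of_unbalanced (ha : Function.Injective a) (hfa : ∀ j, a j ≠ f)
    {u v : Fin h → ℤ}
    (hu : ∀ i, u i ∈ Set.range a ∪ {f}) (hv : ∀ i, v i ∈ Set.range a ∪ {f})
    (hsum : ∑ i, u i = ∑ i, v i) (hlt : cnt h v f < cnt h u f) :
    ∃ (r : ℕ) (m n : Fin (k+1) → ℕ), 1 ≤ r ∧ (∑ i, m i) = h ∧ r + (∑ i, n i) = h ∧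
      (r : ℤ) * f + ∑ i, (n i : ℤ) * a i = ∑ i, (m i : ℤ) * a i := by
  classical
  set su := cnt h u f
  set sv := cnt h v f
  refine ⟨su - sv, (fun j => cnt h v (a j) + if j = 0 then sv else 0),
    (fun j => cnt h u (a j) + if j = 0 then sv else 0), by omega, ?_, ?_, ?_⟩
  · have hcv := cnt_decomp_card ha hfa hv
    rw [Finset.sum_add_distrib, Finset.sum_ite_eq' Finset.univ (0 : Fin (k+1)) (fun _ => sv)]
    simp only [Finset.mem_univ, if_pos]
    omega
  · have hcu := cnt_decomp_card ha hfa hu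
    rw [Finset.sum_add_distrib, Finset.sum_ite_eq' Finset.univ (0 : Fin (k+1)) (fun _ => sv)]
    simp only [Finset.mem_univ, if_pos]
    omega
  · have hdu := cnt_decomp_sum ha hfa hu
    have hdv := cnt_decomp_sum ha hfa hv
    have hcast : ((su - sv : ℕ) : ℤ) = (su : ℤ) - sv := by
      rw [Nat.cast_sub hlt.le]
    rw [hcast]
    have expand : ∀ (w : Fin (k+1) → ℕ),
        ∑ i, ((w i + if i = 0 then sv else 0 : ℕ) : ℤ) * a i
          = (∑ i, (w i : ℤ) * a i) + (sv : ℤ) * a 0 := by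
      intro w
      have hterm : ∀ i : Fin (k+1), ((w i + if i = 0 then sv else 0 : ℕ) : ℤ) * a i
          = (w i : ℤ) * a i + (if i = 0 then (sv : ℤ) * a i else 0) := by
        intro i
        by_cases hi : i = 0 <;> simp [hi] <;> push_cast <;> ring
      rw [Finset.sum_congr rfl (fun i _ => hterm i), Finset.sum_add_distrib,
        Finset.sum_ite_eq' Finset.univ (0 : Fin (k+1)) (fun i => (sv : ℤ) * a i)]
      simp
    rw [expand, expand]
    rw [hdu, hdv] at hsum
    linarith [hsum]
end

section
variable {h k : ℕ} {a : Fin (k+1) → ℤ} {f : ℤ}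

lemma canonicalize (N : ℕ) :
    ∀ (m n : Fin (k+1) → ℕ),
    (∑ i ∈ Finset.univ.filter (fun i : Fin (k+1) => i ≠ 0), min (m i) (n i)) ≤ N →
    ∀ (r : ℕ), (∑ i, m i) = h → r + (∑ i, n i) = h →
    (r : ℤ) * f + ∑ i, (n i : ℤ) * a i = ∑ i, (m i : ℤ) * a i →
    ∃ m' n' : Fin (k+1) → ℕ, (∑ i, m' i) = h ∧ r + (∑ i, n' i) = h ∧
      ((r : ℤ) * f + ∑ i, (n' i : ℤ) * a i = ∑ i, (m' i : ℤ) * a i) ∧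
      (∀ i : Fin (k+1), i ≠ 0 → (m' i = 0 ∨ n' i = 0)) := by
  induction N with
  | zero =>
    intro m n hmeas r hm hn heq
    refine ⟨m, n, hm, hn, heq, fun i hi => ?_⟩
    by_contra hcon
    push_neg at hcon
    have hmin : 1 ≤ min (m i) (n i) := by omega
    have : min (m i) (n i) ≤ ∑ i ∈ Finset.univ.filter (fun i : Fin (k+1) => i ≠ 0),
        min (m i) (n i) :=
      Finset.single_le_sum (f := fun i => min (m i) (n i)) (fun _ _ => Nat.zero_le _)
        (Finset.mem_filter.mpr ⟨Finset.mem_univ _, hi⟩)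
    omega
  | succ N ih =>
    intro m n hmeas r hm hn heq
    by_cases hd : ∀ i : Fin (k+1), i ≠ 0 → (m i = 0 ∨ n i = 0)
    · exact ⟨m, n, hm, hn, heq, hd⟩
    push_neg at hd
    obtain ⟨i, hi0, hmi, hni⟩ := hd
    set m' := Function.update (Function.update m i (m i - 1)) 0 (m 0 + 1) with hm'def
    set n' := Function.update (Function.update n i (n i - 1)) 0 (n 0 + 1) with hn'def
    have hval : ∀ (w : Fin (k+1) → ℕ) (x : Fin (k+1)),
        Function.update (Function.update w i (w i - 1)) 0 (w 0 + 1) x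
          = if x = 0 then w 0 + 1 else if x = i then w i - 1 else w x := by
      intro w x
      by_cases hx0 : x = 0
      · subst hx0; simp [Function.update]
      · by_cases hxi : x = i
        · subst hxi; simp [Function.update, hx0]
        · simp [Function.update, hx0, hxi]
    have hmem0 : i ∈ (Finset.univ : Finset (Fin (k+1))).erase 0 :=
      Finset.mem_erase.mpr ⟨hi0, Finset.mem_univ _⟩
    have extract : ∀ {β : Type} [AddCommMonoid β] (g : Fin (k+1) → β),
        ∑ x, g x = g 0 + (g i + ∑ x ∈ ((Finset.univ.erase 0).erase i), g x) := by
      intro β _ g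
      rw [Finset.add_sum_erase _ g hmem0, Finset.add_sum_erase _ g (Finset.mem_univ 0)]
    have hsame : ∀ (w : Fin (k+1) → ℕ) x, x ≠ 0 → x ≠ i →
        Function.update (Function.update w i (w i - 1)) 0 (w 0 + 1) x = w x := by
      intro w x hx0 hxi
      rw [hval w x, if_neg hx0, if_neg hxi]
    have hrest : ∀ (w : Fin (k+1) → ℕ) (g : ℕ → Fin (k+1) → ℤ),
        True := fun _ _ => trivial
    -- natural sums preserved
    have hv0 : ∀ (w : Fin (k+1) → ℕ),
        Function.update (Function.update w i (w i - 1)) 0 (w 0 + 1) 0 = w 0 + 1 := by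
      intro w; rw [hval, if_pos rfl]
    have hvi : ∀ (w : Fin (k+1) → ℕ),
        Function.update (Function.update w i (w i - 1)) 0 (w 0 + 1) i = w i - 1 := by
      intro w; rw [hval, if_neg hi0, if_pos rfl]
    have congr_rest : ∀ (w : Fin (k+1) → ℕ),
        (∑ x ∈ ((Finset.univ.erase 0).erase i),
          Function.update (Function.update w i (w i - 1)) 0 (w 0 + 1) x)
        = ∑ x ∈ ((Finset.univ.erase 0).erase i), w x := fun w =>
      Finset.sum_congr rfl (fun x hx => hsame w x
        (Finset.mem_erase.mp (Finset.mem_erase.mp hx).2).1 (Finset.mem_erase.mp hx).1)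
    have hsum_pres : ∀ (w : Fin (k+1) → ℕ), 1 ≤ w i →
        ∑ x, Function.update (Function.update w i (w i - 1)) 0 (w 0 + 1) x = ∑ x, w x := by
      intro w hw
      rw [extract (fun x => Function.update (Function.update w i (w i - 1)) 0 (w 0 + 1) x),
        extract (fun x => w x), hv0, hvi, congr_rest w]
      omega
    have hm'sum : ∑ x, m' x = h := by rw [hm'def, hsum_pres m (by omega)]; exact hm
    have hn'sum : r + ∑ x, n' x = h := by rw [hn'def, hsum_pres n (by omega)]; exact hn
    -- weighted integer sums
    have hzsum : ∀ (w : Fin (k+1) → ℕ), 1 ≤ w i →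
        ∑ x, ((Function.update (Function.update w i (w i - 1)) 0 (w 0 + 1) x : ℕ) : ℤ) * a x
          = (∑ x, (w x : ℤ) * a x) + a 0 - a i := by
      intro w hw
      have congr_restz :
          (∑ x ∈ ((Finset.univ.erase 0).erase i),
            ((Function.update (Function.update w i (w i - 1)) 0 (w 0 + 1) x : ℕ) : ℤ) * a x)
          = ∑ x ∈ ((Finset.univ.erase 0).erase i), (w x : ℤ) * a x :=
        Finset.sum_congr rfl (fun x hx => by
          rw [hsame w x (Finset.mem_erase.mp (Finset.mem_erase.mp hx).2).1
            (Finset.mem_erase.mp hx).1])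
      rw [extract (fun x =>
          ((Function.update (Function.update w i (w i - 1)) 0 (w 0 + 1) x : ℕ) : ℤ) * a x),
        extract (fun x => (w x : ℤ) * a x), hv0, hvi, congr_restz]
      push_cast [Nat.cast_sub hw]
      ring
    have heq' : (r : ℤ) * f + ∑ x, (n' x : ℤ) * a x = ∑ x, (m' x : ℤ) * a x := by
      rw [hm'def, hn'def, hzsum m (by omega), hzsum n (by omega)]
      linarith [heq]
    -- measure decreases
    have hfilter : (Finset.univ.filter (fun x : Fin (k+1) => x ≠ 0))
        = (Finset.univ : Finset (Fin (k+1))).erase 0 := by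
      ext x; simp [Finset.mem_erase, and_comm]
    have hmeas' : (∑ x ∈ Finset.univ.filter (fun x : Fin (k+1) => x ≠ 0),
        min (m' x) (n' x)) ≤ N := by
      have e1 : ∑ x ∈ Finset.univ.filter (fun x : Fin (k+1) => x ≠ 0), min (m' x) (n' x)
          = min (m' i) (n' i) + ∑ x ∈ ((Finset.univ.erase 0).erase i), min (m' x) (n' x) := by
        rw [hfilter, ← Finset.add_sum_erase _ _ hmem0]
      have e2 : ∑ x ∈ Finset.univ.filter (fun x : Fin (k+1) => x ≠ 0), min (m x) (n x)
          = min (m i) (n i) + ∑ x ∈ ((Finset.univ.erase 0).erase i), min (m x) (n x) := by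
        rw [hfilter, ← Finset.add_sum_erase _ _ hmem0]
      have e3 : ∑ x ∈ ((Finset.univ.erase 0).erase i), min (m' x) (n' x)
          = ∑ x ∈ ((Finset.univ.erase 0).erase i), min (m x) (n x) := by
        refine Finset.sum_congr rfl (fun x hx => ?_)
        rw [hm'def, hn'def, hsame m x (Finset.mem_erase.mp (Finset.mem_erase.mp hx).2).1
          (Finset.mem_erase.mp hx).1, hsame n x (Finset.mem_erase.mp (Finset.mem_erase.mp hx).2).1
          (Finset.mem_erase.mp hx).1]
      have e4 : m' i = m i - 1 := by rw [hm'def, hvi]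
      have e5 : n' i = n i - 1 := by rw [hn'def, hvi]
      rw [e1, e3, e4, e5] at *
      rw [e2] at hmeas
      omega
    exact ih m' n' hmeas' r hm'sum hn'sum heq'
end

section
variable {h k : ℕ} {a : Fin (k+1) → ℤ} {f : ℤ}

lemma exists_data (ha : Function.Injective a) (hfa : ∀ j, a j ≠ f)
    (hA : IsBhSet h (Set.range a))
    (hbad : ¬ IsBhSet h (Set.range a ∪ {f})) :
    ∃ (r : ℕ) (m n : Fin (k+1) → ℕ), 1 ≤ r ∧ (∑ i, m i) = h ∧ r + (∑ i, n i) = h ∧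
      ((r : ℤ) * f + ∑ i, (n i : ℤ) * a i = ∑ i, (m i : ℤ) * a i) ∧
      (∀ i : Fin (k+1), i ≠ 0 → (m i = 0 ∨ n i = 0)) := by
  classical
  rw [IsBhSet] at hbad
  push_neg at hbad
  obtain ⟨u, v, hu, hv, hsum, hne⟩ := hbad
  have hcnt := cnt_f_ne hA ha hfa hu hv hsum hne
  have key : ∀ (u v : Fin h → ℤ), (∀ i, u i ∈ Set.range a ∪ {f}) →
      (∀ i, v i ∈ Set.range a ∪ {f}) → (∑ i, u i = ∑ i, v i) →
      cnt h v f < cnt h u f →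
      ∃ (r : ℕ) (m n : Fin (k+1) → ℕ), 1 ≤ r ∧ (∑ i, m i) = h ∧ r + (∑ i, n i) = h ∧
        ((r : ℤ) * f + ∑ i, (n i : ℤ) * a i = ∑ i, (m i : ℤ) * a i) ∧
        (∀ i : Fin (k+1), i ≠ 0 → (m i = 0 ∨ n i = 0)) := by
    intro u v hu hv hsum hlt
    obtain ⟨r, m, n, hr, hm, hn, heq⟩ := data_of_unbalanced ha hfa hu hv hsum hlt
    obtain ⟨m', n', hm', hn', heq', hdisj⟩ := canonicalize
      (∑ i ∈ Finset.univ.filter (fun i : Fin (k+1) => i ≠ 0), min (m i) (n i))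
      m n (le_refl _) r hm hn heq
    exact ⟨r, m', n', hr, hm', hn', heq', hdisj⟩
  rcases lt_or_gt_of_ne hcnt with hlt | hlt
  · exact key v u hv hu hsum.symm hlt
  · exact key u v hu hv hsum hlt
end

def Phi (h k : ℕ) (hh : 0 < h) (a : Fin (k+1) → ℤ)
    (d : (_ : ℕ) × (_ : Finset (Fin k)) × Multiset (Fin (k+1)) × Finset (Fin h)) (f : ℤ) : Prop :=
  ∃ m n : Fin (k+1) → ℕ, 1 ≤ d.1 ∧ (∑ i, m i) = h ∧
    ((d.1 : ℤ) * f + ∑ i, (n i : ℤ) * a i = ∑ i, (m i : ℤ) * a i) ∧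
    (∀ j : Fin k, j ∈ d.2.1 ↔ m j.succ ≠ 0) ∧
    d.2.2.2 = d.2.1.image (encFn h k hh d.2.1 m) ∧
    d.2.2.1 = nMult k n

lemma sum_succ_le {h k : ℕ} {m : Fin (k+1) → ℕ} (S : Finset (Fin k)) (hm : ∑ i, m i = h) :
    ∑ j' ∈ S, m j'.succ ≤ h := by
  have h1 : ∑ j' ∈ S, m j'.succ ≤ ∑ j' : Fin k, m j'.succ :=
    Finset.sum_le_sum_of_subset (Finset.subset_univ S)
  rw [Fin.sum_univ_succ] at hm
  omega

lemma Phi_inj {h k : ℕ} (hh : 0 < h) (a : Fin (k+1) → ℤ)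
    (d : (_ : ℕ) × (_ : Finset (Fin k)) × Multiset (Fin (k+1)) × Finset (Fin h)) (f1 f2 : ℤ)
    (h1 : Phi h k hh a d f1) (h2 : Phi h k hh a d f2) : f1 = f2 := by
  obtain ⟨m, n, hr, hms, heq, hsupp, hP, hy⟩ := h1
  obtain ⟨m', n', -, hms', heq', hsupp', hP', hy'⟩ := h2
  have hmm : m = m' := by
    refine enc_inj hh hsupp hsupp' (by rw [hms, hms']) (sum_succ_le _ hms) (sum_succ_le _ hms')
      ?_
    rw [← hP, ← hP']
  have hnn : n = n' := nMult_inj _ _ (by rw [← hy, ← hy'])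
  rw [hmm, hnn] at heq
  have hd1 : (0 : ℤ) < (d.1 : ℤ) := by exact_mod_cast hr
  have hff : (d.1 : ℤ) * f1 = (d.1 : ℤ) * f2 := by linarith [heq, heq']
  exact mul_left_cancel₀ (ne_of_gt hd1) hff

lemma data_mem {h k : ℕ} (hh : 0 < h) {a : Fin (k+1) → ℤ} (ha : StrictMono a)
    (hA : IsBhSet h (Set.range a)) {f : ℤ} (hf : a (Fin.last k) < f)
    (hbad : ¬ IsBhSet h (Set.range a ∪ {f})) :
    ∃ d ∈ Dfin h k, Phi h k hh a d f := by
  classical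
  have hfa : ∀ j, a j ≠ f := fun j => ne_of_lt (lt_of_le_of_lt (ha.monotone (Fin.le_last j)) hf)
  obtain ⟨r, m, n, hr, hm, hn, heq, hdisj⟩ := exists_data ha.injective hfa hA hbad
  set t := ∑ j : Fin k, m j.succ with ht_def
  have hm0t : m 0 + t = h := by rw [← hm, Fin.sum_univ_succ]
  -- t > r
  have htr : r < t := by
    by_contra hcon
    push_neg at hcon
    have hsum_le : ∑ i, (m i : ℤ) * a i ≤ (m 0 : ℤ) * a 0 + (t : ℤ) * a (Fin.last k) := by
      rw [Fin.sum_univ_succ]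
      have : ∑ j : Fin k, (m j.succ : ℤ) * a j.succ
          ≤ ∑ j : Fin k, (m j.succ : ℤ) * a (Fin.last k) :=
        Finset.sum_le_sum (fun j _ => mul_le_mul_of_nonneg_left
          (ha.monotone (Fin.le_last _)) (Nat.cast_nonneg _))
      have e : ∑ j : Fin k, (m j.succ : ℤ) * a (Fin.last k) = (t : ℤ) * a (Fin.last k) := by
        rw [← Finset.sum_mul, ht_def]
        push_cast
        ring
      linarith [this, e.le, e.ge]
    have hn_ge : ((h : ℤ) - r) * a 0 ≤ ∑ i, (n i : ℤ) * a i := by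
      have hterm : ∀ i : Fin (k+1), (n i : ℤ) * a 0 ≤ (n i : ℤ) * a i :=
        fun i => mul_le_mul_of_nonneg_left (ha.monotone (Fin.zero_le i)) (Nat.cast_nonneg _)
      have : ∑ i, (n i : ℤ) * a 0 ≤ ∑ i, (n i : ℤ) * a i :=
        Finset.sum_le_sum (fun i _ => hterm i)
      have e : ∑ i, (n i : ℤ) * a 0 = ((h : ℤ) - r) * a 0 := by
        rw [← Finset.sum_mul, ← Nat.cast_sum]
        have hcast : ((∑ i, n i : ℕ) : ℤ) = (h : ℤ) - r := by
          have := hn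
          omega
        rw [hcast]
      linarith [this, e.le]
    have hrf : (r : ℤ) * a (Fin.last k) < (r : ℤ) * f :=
      mul_lt_mul_of_pos_left hf (by exact_mod_cast hr)
    have ha0L : a 0 ≤ a (Fin.last k) := ha.monotone (Fin.zero_le _)
    have hm0 : (m 0 : ℤ) = (h : ℤ) - t := by
      have := hm0t
      push_cast
      omega
    have hm0a : (m 0 : ℤ) * a 0 = ((h : ℤ) - t) * a 0 := by rw [hm0]
    have hint : ((r : ℤ) - t) * a 0 ≤ ((r : ℤ) - t) * a (Fin.last k) :=
      mul_le_mul_of_nonneg_left ha0L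
        (show (0:ℤ) ≤ (r : ℤ) - t by
          have : (t:ℤ) ≤ r := by exact_mod_cast hcon
          omega)
    linarith [hsum_le, hn_ge, hrf, heq, hm0a, hint]
  have hth : t ≤ h := by omega
  set S := Finset.univ.filter (fun j : Fin k => m j.succ ≠ 0) with hS_def
  have hsupp : ∀ j : Fin k, j ∈ S ↔ m j.succ ≠ 0 := by
    intro j
    simp [hS_def]
  have hsum_S : ∑ j' ∈ S, m j'.succ = t := by
    rw [hS_def, ht_def]
    exact Finset.sum_filter_ne_zero _
  have hSne : S.Nonempty := by
    have ht0 : t ≠ 0 := by omega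
    obtain ⟨j, -, hj⟩ := Finset.exists_ne_zero_of_sum_ne_zero (by rw [ht_def] at ht0; exact ht0)
    exact ⟨j, (hsupp j).mpr hj⟩
  have hmS : ∀ j ∈ S, m j.succ ≠ 0 := fun j hj => (hsupp j).mp hj
  have htS : ∑ j' ∈ S, m j'.succ ≤ h := by omega
  refine ⟨⟨r, S, nMult k n, S.image (encFn h k hh S m)⟩, ?_, ?_⟩
  · rw [Dfin, Finset.mem_sigma]
    refine ⟨Finset.mem_Icc.mpr ⟨hr, show r ≤ h - 1 by omega⟩, ?_⟩
    rw [Finset.mem_sigma]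
    refine ⟨Finset.mem_powerset.mpr (Finset.subset_univ _), ?_⟩
    rw [Finset.mem_product]
    constructor
    · refine mem_Ydom _ _ _ (show Multiset.card (nMult k n) = h - r by rw [card_nMult]; omega) ?_
      intro i hi
      rw [mem_nMult_iff] at hi
      rw [Finset.mem_sdiff]
      refine ⟨Finset.mem_univ _, ?_⟩
      intro hmem
      obtain ⟨j, hjS, hji⟩ := Finset.mem_image.mp hmem
      have hmj : m i ≠ 0 := by
        rw [← hji]
        exact (hsupp j).mp hjS
      have hi0 : i ≠ 0 := by
        rw [← hji]
        exact Fin.succ_ne_zero j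
      rcases hdisj i hi0 with hc | hc
      · exact hmj hc
      · exact hi hc
    · rw [Pset, Finset.mem_filter]
      have hcardP : (S.image (encFn h k hh S m)).card = S.card := by
        apply Finset.card_image_of_injOn
        intro x hx y hy hxy
        rcases lt_trichotomy x y with hlt | rfl | hlt
        · exact absurd hxy (ne_of_lt (encFn_strictMonoOn hh htS hmS _ hx _ hy hlt))
        · rfl
        · exact absurd hxy.symm (ne_of_lt (encFn_strictMonoOn hh htS hmS _ hy _ hx hlt))
      refine ⟨Finset.mem_powersetCard.mpr ⟨Finset.subset_univ _, hcardP⟩, ?_⟩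
      refine ⟨encFn h k hh S m (S.max' hSne), Finset.mem_image_of_mem _ (S.max'_mem hSne), ?_⟩
      have hmaxS : S.max' hSne ∈ S := S.max'_mem hSne
      have hval := encFn_val hh htS hmS hmaxS
      have hps : psum S m (S.max' hSne) = t := by
        rw [psum]
        have : S.filter (fun j' => j' ≤ S.max' hSne) = S := by
          ext x
          simp only [Finset.mem_filter, and_iff_left_iff_imp]
          exact fun hx => Finset.le_max' S x hx
        rw [this, hsum_S]
      show r ≤ (encFn h k hh S m (S.max' hSne) : ℕ)
      rw [hval, hps]
      omega
  · exact ⟨m, n, hr, hm, heq, hsupp, rfl, rfl⟩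

theorem stmt_1 (h k : ℕ) (hh : 1 ≤ h)
    (a : Fin (k + 1) → ℤ) (ha : StrictMono a)
    (hA : IsBhSet h (Set.range a)) :
    {f : ℤ | a (Fin.last k) < f ∧ ¬ IsBhSet h (Set.range a ∪ {f})}.Finite ∧
    {f : ℤ | a (Fin.last k) < f ∧ ¬ IsBhSet h (Set.range a ∪ {f})}.ncard ≤
      ∑ r ∈ Finset.Icc 1 (h - 1), ∑ M ∈ Finset.Icc 1 k,
        k.choose M * (k - M + h - r).choose (h - r) * (h.choose M - r.choose M) := by
  classical
  have hh0 : 0 < h := hh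
  set B := {f : ℤ | a (Fin.last k) < f ∧ ¬ IsBhSet h (Set.range a ∪ {f})} with hB
  have key : ∀ f : B, ∃ d : {d // d ∈ Dfin h k}, Phi h k hh0 a d.1 f.1 := by
    rintro ⟨f, hf1, hf2⟩
    obtain ⟨d, hd, hphi⟩ := data_mem hh0 ha hA hf1 hf2
    exact ⟨⟨d, hd⟩, hphi⟩
  choose e he using key
  have einj : Function.Injective e := by
    intro f1 f2 hee
    have h1 := he f1
    have h2 := he f2
    rw [hee] at h1
    exact Subtype.ext (Phi_inj hh0 a _ _ _ h1 h2)
  have hfin : B.Finite := by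
    rw [← Set.finite_coe_iff]
    exact Finite.of_injective e einj
  refine ⟨hfin, ?_⟩
  have hle : Nat.card B ≤ Nat.card {d // d ∈ Dfin h k} :=
    Nat.card_le_card_of_injective e einj
  rw [Nat.card_coe_set_eq] at hle
  rw [Nat.card_eq_finsetCard] at hle
  calc B.ncard ≤ (Dfin h k).card := hle
    _ = _ := card_Dfin h k hh
end

section
/- Define real numbers α_k for k ≥ 7 by α_7 = 0.269877 and α_{k+1} = α_k/2 + (1/(2^k·k!))·Σ_{j=0}^{k−1} binom(k−1, j)·binom(k, j)·2^j. Then for every k ≥ 7 one has α_{k+1} ≤ α_k/2 + 4^k/(2k·k!), and consequently for every ε with 0 < ε < 2, the sequence (2 − ε)^k·α_k tends to 0 as k → ∞. -/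
/-- Auxiliary sequence: `alphaAux n = α_{n+7}`, where `α_7 = 0.269877` and
`α_{k+1} = α_k/2 + (1/(2^k·k!))·Σ_{j=0}^{k−1} C(k−1,j)·C(k,j)·2^j`. -/
noncomputable def alphaAux : ℕ → ℝ
  | 0 => 0.269877
  | (n + 1) => alphaAux n / 2 +
      (1 / ((2 : ℝ) ^ (n + 7) * Nat.factorial (n + 7))) *
        ∑ j ∈ Finset.range (n + 7),
          ((n + 6).choose j : ℝ) * ((n + 7).choose j : ℝ) * (2 : ℝ) ^ j

/-- `alpha k = α_k` for `k ≥ 7`. -/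
noncomputable def alpha (k : ℕ) : ℝ := alphaAux (k - 7)

lemma nat1 : ∀ k : ℕ, 3 ≤ k → 2 * 3 ^ k ≤ 4 ^ k := by
  intro k hk
  induction k with
  | zero => omega
  | succ n ih =>
    rcases Nat.lt_or_ge n 3 with h | h
    · interval_cases n <;> first | omega | norm_num
    · have := ih (by omega)
      calc 2 * 3 ^ (n + 1) = 3 * (2 * 3 ^ n) := by ring
        _ ≤ 3 * 4 ^ n := by omega
        _ ≤ 4 ^ (n + 1) := by ring_nf; omega

lemma nat2 (n : ℕ) : 2 * (n + 7) * 3 ^ (n + 6) ≤ 4 ^ (n + 7) := by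
  induction n with
  | zero => norm_num
  | succ m ih =>
    have h1 := nat1 (m + 7) (by omega)
    calc 2 * (m + 1 + 7) * 3 ^ (m + 1 + 6)
        = 3 * (2 * (m + 7) * 3 ^ (m + 6)) + 2 * 3 ^ (m + 7) := by ring
      _ ≤ 3 * 4 ^ (m + 7) + 4 ^ (m + 7) := by omega
      _ = 4 ^ (m + 1 + 7) := by ring

lemma nat3 : ∀ k : ℕ, 7 ≤ k → 9 ^ k ≤ 136 * k * Nat.factorial k := by
  intro k hk
  induction k, hk using Nat.le_induction with
  | base => norm_num [Nat.factorial]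
  | succ k hk ih =>
    have h1 : 9 * k ≤ (k + 1) * (k + 1) := by nlinarith
    calc 9 ^ (k + 1) = 9 * 9 ^ k := by ring
      _ ≤ 9 * (136 * k * Nat.factorial k) := by omega
      _ = 136 * (9 * k) * Nat.factorial k := by ring
      _ ≤ 136 * ((k + 1) * (k + 1)) * Nat.factorial k := by
          exact Nat.mul_le_mul_right _ (Nat.mul_le_mul_left _ h1)
      _ = 136 * (k + 1) * Nat.factorial (k + 1) := by
          rw [Nat.factorial_succ]; ring

lemma natS (n : ℕ) :
    (∑ j ∈ Finset.range (n + 7), (n + 6).choose j * (n + 7).choose j * 2 ^ j)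
      ≤ 3 ^ (n + 6) * 2 ^ (n + 7) := by
  have hterm : ∀ j ∈ Finset.range (n + 7),
      (n + 6).choose j * (n + 7).choose j * 2 ^ j ≤ 3 ^ (n + 6) * (n + 7).choose j := by
    intro j hj
    have hkey : (n + 6).choose j * 2 ^ j ≤ 3 ^ (n + 6) := by
      have hid : (3 : ℕ) ^ (n + 6) =
          ∑ i ∈ Finset.range (n + 7), 2 ^ i * 1 ^ (n + 6 - i) * (n + 6).choose i := by
        have := add_pow (2 : ℕ) 1 (n + 6)
        norm_num at this ⊢
        rw [this]
      rw [hid]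
      have := Finset.single_le_sum
        (f := fun i => 2 ^ i * 1 ^ (n + 6 - i) * (n + 6).choose i)
        (fun i _ => Nat.zero_le _) hj
      simpa [mul_comm] using this
    calc (n + 6).choose j * (n + 7).choose j * 2 ^ j
        = ((n + 6).choose j * 2 ^ j) * (n + 7).choose j := by ring
      _ ≤ 3 ^ (n + 6) * (n + 7).choose j := Nat.mul_le_mul_right _ hkey
  calc (∑ j ∈ Finset.range (n + 7), (n + 6).choose j * (n + 7).choose j * 2 ^ j)
      ≤ ∑ j ∈ Finset.range (n + 7), 3 ^ (n + 6) * (n + 7).choose j :=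
        Finset.sum_le_sum hterm
    _ = 3 ^ (n + 6) * ∑ j ∈ Finset.range (n + 7), (n + 7).choose j := by
        rw [Finset.mul_sum]
    _ ≤ 3 ^ (n + 6) * 2 ^ (n + 7) := by
        apply Nat.mul_le_mul_left
        calc (∑ j ∈ Finset.range (n + 7), (n + 7).choose j)
            ≤ ∑ j ∈ Finset.range (n + 8), (n + 7).choose j := by
              apply Finset.sum_le_sum_of_subset
              exact Finset.range_subset_range.2 (by omega)
          _ = 2 ^ (n + 7) := Nat.sum_range_choose (n + 7)

lemma alphaAux_nonneg : ∀ n, 0 ≤ alphaAux n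
  | 0 => by norm_num [alphaAux]
  | (n + 1) => by
    have h := alphaAux_nonneg n
    rw [alphaAux]
    have h2 : (0 : ℝ) ≤ ∑ j ∈ Finset.range (n + 7),
        ((n + 6).choose j : ℝ) * ((n + 7).choose j : ℝ) * (2 : ℝ) ^ j := by
      apply Finset.sum_nonneg
      intro j _
      positivity
    positivity

lemma key1 : ∀ k : ℕ, 7 ≤ k →
    alpha (k + 1) ≤ alpha k / 2 + (4 : ℝ) ^ k / (2 * k * Nat.factorial k) := by
  intro k hk
  obtain ⟨n, rfl⟩ : ∃ n, k = n + 7 := ⟨k - 7, by omega⟩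
  have e1 : alpha (n + 7 + 1) = alphaAux (n + 1) := by
    rw [alpha, show n + 7 + 1 - 7 = n + 1 by omega]
  have e2 : alpha (n + 7) = alphaAux n := by
    rw [alpha, show n + 7 - 7 = n by omega]
  rw [e1, e2, alphaAux]
  gcongr ?_ + ?_
  · exact le_rfl
  · have hS : (∑ j ∈ Finset.range (n + 7),
        ((n + 6).choose j : ℝ) * ((n + 7).choose j : ℝ) * (2 : ℝ) ^ j)
        ≤ (3 : ℝ) ^ (n + 6) * 2 ^ (n + 7) := by
      exact_mod_cast natS n
    have hfac : (0 : ℝ) < ((n + 7).factorial : ℝ) := by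
      exact_mod_cast (n + 7).factorial_pos
    have h2 : (2 : ℝ) * (n + 7) * 3 ^ (n + 6) ≤ 4 ^ (n + 7) := by
      have := nat2 n
      push_cast
      exact_mod_cast this
    calc (1 / ((2:ℝ) ^ (n + 7) * ((n + 7).factorial : ℝ))) *
          ∑ j ∈ Finset.range (n + 7),
            ((n + 6).choose j : ℝ) * ((n + 7).choose j : ℝ) * (2 : ℝ) ^ j
        ≤ (1 / ((2:ℝ) ^ (n + 7) * ((n + 7).factorial : ℝ))) *
            ((3 : ℝ) ^ (n + 6) * 2 ^ (n + 7)) := by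
          apply mul_le_mul_of_nonneg_left hS
          positivity
      _ = (3 : ℝ) ^ (n + 6) / ((n + 7).factorial : ℝ) := by
          field_simp
      _ ≤ (4 : ℝ) ^ (n + 7) / (2 * ((n + 7 : ℕ) : ℝ) * ((n + 7).factorial : ℝ)) := by
          rw [div_le_div_iff₀ hfac (by positivity)]
          have hmul := mul_le_mul_of_nonneg_right h2 hfac.le
          push_cast at hmul ⊢
          nlinarith [hmul]

lemma bdd : ∀ k : ℕ, 7 ≤ k → alpha k * 2 ^ k ≤ 600 - 1224 * (8 / 9 : ℝ) ^ k := by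
  intro k hk
  induction k, hk using Nat.le_induction with
  | base =>
    have h7 : alpha 7 = 0.269877 := by
      rw [alpha, show 7 - 7 = 0 by omega, alphaAux]
    rw [h7]
    norm_num
  | succ k hk ih =>
    have hkpos : (0 : ℝ) < (k : ℝ) := by
      exact_mod_cast Nat.lt_of_lt_of_le (by norm_num) hk
    have hfac : (0 : ℝ) < (Nat.factorial k : ℝ) := by exact_mod_cast k.factorial_pos
    have h1 := key1 k hk
    have h2 : alpha (k + 1) * 2 ^ (k + 1) ≤ alpha k * 2 ^ k + 8 ^ k / (k * Nat.factorial k) := by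
      calc alpha (k + 1) * 2 ^ (k + 1)
          ≤ (alpha k / 2 + (4 : ℝ) ^ k / (2 * k * Nat.factorial k)) * 2 ^ (k + 1) := by
            apply mul_le_mul_of_nonneg_right h1 (by positivity)
        _ = alpha k * 2 ^ k + 8 ^ k / (k * Nat.factorial k) := by
            rw [pow_succ]
            field_simp
            ring_nf
            rw [show (8 : ℝ) ^ k = 4 ^ k * 2 ^ k by rw [← mul_pow]; norm_num]
            ring
    have h3 : (8 : ℝ) ^ k / (k * Nat.factorial k) ≤ 136 * (8 / 9 : ℝ) ^ k := by
      have h9 : (9 : ℝ) ^ k ≤ 136 * k * Nat.factorial k := by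
        exact_mod_cast nat3 k hk
      have h8 : (0 : ℝ) ≤ 8 ^ k := by positivity
      rw [div_le_iff₀ (by positivity), div_pow,
        show (136 : ℝ) * (8 ^ k / 9 ^ k) * ((k : ℝ) * Nat.factorial k)
          = 136 * 8 ^ k * ((k : ℝ) * Nat.factorial k) / 9 ^ k from by ring,
        le_div_iff₀ (by positivity)]
      nlinarith [mul_le_mul_of_nonneg_right h9 h8]
    have h4 : (1224 : ℝ) * (8 / 9) ^ (k + 1) = 1088 * (8 / 9) ^ k := by
      rw [pow_succ]; ring
    linarith

lemma alpha_le (k : ℕ) (hk : 7 ≤ k) : alpha k ≤ 600 / 2 ^ k := by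
  have h := bdd k hk
  have h89 : (0 : ℝ) ≤ 1224 * (8 / 9 : ℝ) ^ k := by positivity
  rw [le_div_iff₀ (by positivity : (0:ℝ) < 2 ^ k)]
  linarith

theorem stmt_19 :
    (∀ k : ℕ, 7 ≤ k →
      alpha (k + 1) ≤ alpha k / 2 + (4 : ℝ) ^ k / (2 * k * Nat.factorial k)) ∧
    (∀ ε : ℝ, 0 < ε → ε < 2 →
      Filter.Tendsto (fun k : ℕ => (2 - ε) ^ k * alpha k) Filter.atTop (nhds 0)) := by
  constructor
  · exact key1
  · intro ε hε0 hε2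
    have hr0 : (0 : ℝ) ≤ (2 - ε) / 2 := by linarith
    have hr1 : (2 - ε) / 2 < 1 := by linarith
    apply squeeze_zero' (g := fun k : ℕ => 600 * ((2 - ε) / 2) ^ k)
    · filter_upwards with k
      have := alphaAux_nonneg (k - 7)
      have h2 : (0 : ℝ) ≤ (2 - ε) ^ k := pow_nonneg (by linarith) k
      exact mul_nonneg h2 (by simpa [alpha] using this)
    · filter_upwards [Filter.eventually_atTop.2 ⟨7, fun k hk => alpha_le k hk⟩] with k hk
      calc (2 - ε) ^ k * alpha k ≤ (2 - ε) ^ k * (600 / 2 ^ k) := by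
            exact mul_le_mul_of_nonneg_left hk (pow_nonneg (by linarith) k)
        _ = 600 * ((2 - ε) / 2) ^ k := by
            rw [div_pow]; ring
    · have := (tendsto_pow_atTop_nhds_zero_of_lt_one hr0 hr1).const_mul (600 : ℝ)
      simpa using this
end
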